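/- Let m, k, δ be integers with m ≥ k ≥ 1 and δ ≥ 0. Then in ℤ[v, v⁻¹] one has ∑_{i=0}^{δ} (−1)^i v^{i(m−k)} [k−1+i choose k−1] [m choose δ−i] = v^{−kδ} [m−k choose δ]. -/

import Mathlib

open LaurentPolynomial

/-- The Gaussian polynomial `⟦N choose t⟧`, an element of `ℤ[v, v⁻¹]` (here `v = T 1`),
defined via the `q`-Pascal recursion (with `q = v²`):
`⟦N choose 0⟧ = 1`, `⟦0 choose t+1⟧ = 0`,
`⟦N+1 choose t+1⟧ = ⟦N choose t⟧ + v^{2(t+1)} ⟦N choose t+1⟧`.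
It equals the product `∏_{i=1}^{t} (v^{2(N−i+1)} − 1)/(v^{2i} − 1)` when `t ≤ N`,
and vanishes when `t > N`. -/
noncomputable def gaussPoly : ℕ → ℕ → LaurentPolynomial ℤ
  | _, 0 => 1
  | 0, _ + 1 => 0
  | N + 1, t + 1 => gaussPoly N t + T (2 * ((t : ℤ) + 1)) * gaussPoly N (t + 1)

/-- The symmetric Gaussian polynomial `[N choose t] = v^{−t(N−t)} ⟦N choose t⟧`. -/
noncomputable def sgauss (N t : ℕ) : LaurentPolynomial ℤ :=
  T (-((t : ℤ) * ((N : ℤ) - (t : ℤ)))) * gaussPoly N t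

/-- The bar involution on `ℤ[v, v⁻¹]`: the ring automorphism fixing `ℤ` and sending
`v ↦ v⁻¹` (substitution `T ↦ T⁻¹`). -/
noncomputable def bar (p : LaurentPolynomial ℤ) : LaurentPolynomial ℤ :=
  LaurentPolynomial.invert p

/-- `p ∈ v⁻¹ℤ[v⁻¹]`: every monomial `v^m` occurring in `p` with nonzero coefficient has
`m ≤ −1`. -/
def InNegPart (p : LaurentPolynomial ℤ) : Prop :=
  ∀ m : ℤ, p.coeff m ≠ 0 → m < 0

lemma gauss_zero (N : ℕ) : gaussPoly N 0 = 1 := by cases N <;> rfl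

lemma gauss_succ (N t : ℕ) :
    gaussPoly (N + 1) (t + 1) = gaussPoly N t + T (2 * ((t : ℤ) + 1)) * gaussPoly N (t + 1) := rfl

lemma gauss_zero_left (t : ℕ) : gaussPoly 0 (t + 1) = 0 := rfl

lemma gauss_eq_zero {N t : ℕ} (h : N < t) : gaussPoly N t = 0 := by
  induction N generalizing t with
  | zero =>
    cases t with
    | zero => omega
    | succ u => rfl
  | succ N ih =>
    cases t with
    | zero => omega
    | succ u =>
      rw [gauss_succ, ih (by omega), ih (by omega)]
      ring

lemma gauss_self (N : ℕ) : gaussPoly N N = 1 := by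
  induction N with
  | zero => rfl
  | succ N ih => rw [gauss_succ, ih, gauss_eq_zero (by omega)]; ring

lemma balance (N : ℕ) : ∀ s : ℕ,
    (T (2 * ((N : ℤ) - s)) - 1) * gaussPoly N s
      = (T (2 * ((s : ℤ) + 1)) - 1) * gaussPoly N (s + 1) := by
  induction N with
  | zero =>
    intro s
    cases s with
    | zero => simp [gauss_zero, gauss_zero_left]
    | succ u => simp [gauss_zero_left]
  | succ N ih =>
    intro s
    cases s with
    | zero =>
      have h0 := ih 0
      rw [gauss_zero] at h0 ⊢
      rw [gauss_succ, gauss_zero]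
      push_cast at h0 ⊢
      norm_num at h0 ⊢
      rw [show (2 * ((N:ℤ) + 1)) = 2 * (N:ℤ) + 2 by ring, T_add]
      linear_combination (T (2 : ℤ) : LaurentPolynomial ℤ) * h0
    | succ u =>
      have h1 := ih u
      have h2 := ih (u + 1)
      rw [gauss_succ, gauss_succ]
      push_cast at h1 h2 ⊢
      rw [show (2 * (((N:ℤ) + 1) - ((u:ℤ) + 1))) = 2 * ((N:ℤ) - (u:ℤ) - 1) + 2 by ring, T_add]
      rw [show (2 * ((N:ℤ) - (u:ℤ))) = 2 * ((N:ℤ) - (u:ℤ) - 1) + 2 by ring, T_add] at h1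
      rw [show (2 * ((N:ℤ) - ((u:ℤ) + 1))) = 2 * ((N:ℤ) - (u:ℤ) - 1) by ring] at h2
      rw [show (2 * (((u:ℤ) + 1) + 1)) = 2 * ((u:ℤ) + 1) + 2 by ring, T_add] at h2 ⊢
      linear_combination h1 + (T (2 * ((u:ℤ) + 1)) * T 2 : LaurentPolynomial ℤ) * h2

lemma pascal2 (N t : ℕ) :
    gaussPoly (N + 1) (t + 1) = T (2 * ((N : ℤ) - t)) * gaussPoly N t + gaussPoly N (t + 1) := by
  have h := balance N t
  rw [gauss_succ]
  linear_combination -h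

noncomputable def S (m κ δ : ℕ) : LaurentPolynomial ℤ :=
  ∑ i ∈ Finset.range (δ + 1),
    ((-1) ^ i : LaurentPolynomial ℤ) *
      T (2 * (i : ℤ) * ((m : ℤ) - (κ : ℤ) - 1 - (δ : ℤ)) + (i : ℤ) * ((i : ℤ) + 1)) *
      gaussPoly (κ + i) κ * gaussPoly m (δ - i)

lemma S_zero (r δ : ℕ) : S (r + 1) 0 δ = gaussPoly r δ := by
  classical
  set g : ℕ → LaurentPolynomial ℤ := fun i =>
    if i ≤ δ then ((-1) ^ i : LaurentPolynomial ℤ) *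
      T (2 * (i : ℤ) * ((r : ℤ) - (δ : ℤ)) + (i : ℤ) * ((i : ℤ) + 1)) *
      gaussPoly r (δ - i) else 0 with hg
  have key : ∀ i ∈ Finset.range (δ + 1),
      ((-1) ^ i : LaurentPolynomial ℤ) *
        T (2 * (i : ℤ) * (((r + 1 : ℕ) : ℤ) - ((0:ℕ) : ℤ) - 1 - (δ : ℤ)) + (i : ℤ) * ((i : ℤ) + 1)) *
        gaussPoly (0 + i) 0 * gaussPoly (r + 1) (δ - i) = g i - g (i + 1) := by
    intro i hi
    rw [Finset.mem_range] at hi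
    have hi' : i ≤ δ := by omega
    rcases eq_or_lt_of_le hi' with rfl | hlt
    · simp only [hg, if_pos le_rfl, if_neg (by omega : ¬ i + 1 ≤ i)]
      rw [Nat.sub_self, gauss_zero, gauss_zero, gauss_zero]
      push_cast
      ring
    · obtain ⟨j, hj⟩ : ∃ j, δ - i = j + 1 := ⟨δ - (i+1), by omega⟩
      have hj1 : δ - (i + 1) = j := by omega
      have hjc : (j : ℤ) = (δ : ℤ) - (i : ℤ) - 1 := by
        have : (δ : ℤ) = (i : ℤ) + (j : ℤ) + 1 := by exact_mod_cast congrArg Nat.cast (by omega : δ = i + j + 1)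
        omega
      rw [hj, pascal2, gauss_zero]
      simp only [hg, if_pos hi', if_pos (by omega : i + 1 ≤ δ), hj, hj1]
      have e1 : (T (2 * (i:ℤ) * (((r + 1 : ℕ):ℤ) - ((0:ℕ):ℤ) - 1 - (δ:ℤ)) + (i:ℤ) * ((i:ℤ) + 1))
            : LaurentPolynomial ℤ)
          = T (2 * (i:ℤ) * ((r:ℤ) - (δ:ℤ)) + (i:ℤ) * ((i:ℤ) + 1)) := by
        congr 1; push_cast; ring
      have e2 : (T (2 * ((i + 1 : ℕ):ℤ) * ((r:ℤ) - (δ:ℤ)) + ((i + 1 : ℕ):ℤ) * (((i + 1 : ℕ):ℤ) + 1))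
            : LaurentPolynomial ℤ)
          = T (2 * (i:ℤ) * ((r:ℤ) - (δ:ℤ)) + (i:ℤ) * ((i:ℤ) + 1)) * T (2 * ((r:ℤ) - (j:ℤ))) := by
        rw [← T_add]; congr 1; push_cast; rw [hjc]; ring
      rw [e1, e2]
      ring
  rw [S, Finset.sum_congr rfl key, Finset.sum_range_sub']
  simp [hg, gauss_zero]

lemma T_shuffle (a b c E e : ℤ) (s X Y : LaurentPolynomial ℤ) (h : a + b + c = E + e) :
    s * T a * (T b * X) * (T c * Y) = T E * (s * T e * X * Y) := by
  have hT : (T a : LaurentPolynomial ℤ) * T b * T c = T E * T e := by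
    rw [← T_add, ← T_add, h, T_add]
  calc s * T a * (T b * X) * (T c * Y) = (T a * T b * T c) * (s * X * Y) := by ring
    _ = (T E * T e) * (s * X * Y) := by rw [hT]
    _ = T E * (s * T e * X * Y) := by ring

lemma S_rec (m j d : ℕ) :
    S m (j + 1) (d + 1)
      = S m j (d + 1) - T (2 * ((m : ℤ) - (j : ℤ) - 2 - (d : ℤ))) * S m (j + 1) d := by
  classical
  set B : ℕ → LaurentPolynomial ℤ := fun i =>
    ((-1) ^ i : LaurentPolynomial ℤ) *
      T (2 * (i : ℤ) * ((m : ℤ) - ((j + 1 : ℕ) : ℤ) - 1 - ((d + 1 : ℕ) : ℤ)) + (i : ℤ) * ((i : ℤ) + 1)) *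
      gaussPoly (j + i) (j + 1) * gaussPoly m (d + 1 - i) with hBdef
  have split : S m (j + 1) (d + 1) = S m j (d + 1) + ∑ i ∈ Finset.range (d + 1 + 1), B i := by
    rw [S, S, ← Finset.sum_add_distrib]
    refine Finset.sum_congr rfl fun i hi => ?_
    have h := pascal2 (j + i) j
    rw [show j + i + 1 = j + 1 + i from by omega] at h
    have e : (T (2 * (i : ℤ) * ((m : ℤ) - (j : ℤ) - 1 - ((d + 1 : ℕ) : ℤ)) + (i : ℤ) * ((i : ℤ) + 1))
          : LaurentPolynomial ℤ)
        = T (2 * (i : ℤ) * ((m : ℤ) - ((j + 1 : ℕ) : ℤ) - 1 - ((d + 1 : ℕ) : ℤ)) + (i : ℤ) * ((i : ℤ) + 1))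
          * T (2 * (((j + i : ℕ) : ℤ) - (j : ℤ))) := by
      rw [← T_add]; congr 1; push_cast; ring
    rw [h, e, hBdef]
    ring
  have hB0 : B 0 = 0 := by
    rw [hBdef]
    simp [gauss_eq_zero (by omega : j < j + 1)]
  have hB : ∑ i ∈ Finset.range (d + 1 + 1), B i
      = -(T (2 * ((m : ℤ) - (j : ℤ) - 2 - (d : ℤ))) * S m (j + 1) d) := by
    rw [Finset.sum_range_succ', hB0, add_zero, S, Finset.mul_sum, ← neg_eq_iff_eq_neg,
      ← Finset.sum_neg_distrib]
    refine Finset.sum_congr rfl fun i hi => ?_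
    have e : (T (2 * ((i + 1 : ℕ) : ℤ) * ((m : ℤ) - ((j + 1 : ℕ) : ℤ) - 1 - ((d + 1 : ℕ) : ℤ))
            + ((i + 1 : ℕ) : ℤ) * (((i + 1 : ℕ) : ℤ) + 1)) : LaurentPolynomial ℤ)
        = T (2 * ((m : ℤ) - (j : ℤ) - 2 - (d : ℤ)))
          * T (2 * (i : ℤ) * ((m : ℤ) - ((j + 1 : ℕ) : ℤ) - 1 - (d : ℤ)) + (i : ℤ) * ((i : ℤ) + 1)) := by
      rw [← T_add]; congr 1; push_cast; ring
    rw [hBdef]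
    simp only
    rw [show j + (i + 1) = j + 1 + i from by omega, show d + 1 - (i + 1) = d - i from by omega, e]
    ring
  rw [split, hB]
  ring

lemma S_main : ∀ κ r δ : ℕ, S (κ + 1 + r) κ δ = gaussPoly r δ := by
  intro κ
  induction κ with
  | zero =>
    intro r δ
    rw [show 0 + 1 + r = r + 1 from by omega]
    exact S_zero r δ
  | succ κ ih =>
    intro r δ
    induction δ with
    | zero =>
      rw [S]
      norm_num [gauss_zero, gauss_self]
    | succ d ihd =>
      rw [S_rec, ihd]
      have h1 : S (κ + 1 + 1 + r) κ (d + 1) = gaussPoly (r + 1) (d + 1) := by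
        rw [show κ + 1 + 1 + r = κ + 1 + (r + 1) from by omega]
        exact ih (r + 1) (d + 1)
      rw [h1, pascal2]
      have e : (2 * (((κ + 1 + 1 + r : ℕ) : ℤ) - (κ : ℤ) - 2 - (d : ℤ)))
          = 2 * ((r : ℤ) - (d : ℤ)) := by push_cast; ring
      rw [e]
      ring

theorem gauss_alternating_sum_identity (m k δ : ℕ) (hk : 1 ≤ k) (hkm : k ≤ m) :
    ∑ i ∈ Finset.range (δ + 1),
        ((-1) ^ i : LaurentPolynomial ℤ) * T ((i : ℤ) * ((m : ℤ) - (k : ℤ))) *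
          sgauss (k - 1 + i) (k - 1) * sgauss m (δ - i)
      = T (-((k : ℤ) * (δ : ℤ))) * sgauss (m - k) δ := by
  obtain ⟨κ, rfl⟩ : ∃ κ, k = κ + 1 := ⟨k - 1, by omega⟩
  obtain ⟨r, rfl⟩ : ∃ r, m = κ + 1 + r := ⟨m - (κ + 1), by omega⟩
  rw [show κ + 1 - 1 = κ from by omega, show κ + 1 + r - (κ + 1) = r from by omega]
  have lhs_eq : ∑ i ∈ Finset.range (δ + 1),
        ((-1) ^ i : LaurentPolynomial ℤ) * T ((i : ℤ) * (((κ + 1 + r : ℕ) : ℤ) - ((κ + 1 : ℕ) : ℤ))) *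
          sgauss (κ + i) κ * sgauss (κ + 1 + r) (δ - i)
      = T (-((δ : ℤ) * (((κ + 1 + r : ℕ) : ℤ) - (δ : ℤ)))) * S (κ + 1 + r) κ δ := by
    rw [S, Finset.mul_sum]
    refine Finset.sum_congr rfl fun i hi => ?_
    rw [Finset.mem_range] at hi
    have hc : ((δ - i : ℕ) : ℤ) = (δ : ℤ) - (i : ℤ) := by
      rw [Nat.cast_sub (by omega)]
    rw [sgauss, sgauss]
    refine T_shuffle _ _ _ _ _ _ _ _ ?_
    push_cast [hc]
    ring
  rw [lhs_eq, S_main, sgauss, ← mul_assoc, ← T_add]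
  congr 2
  push_cast
  ring
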